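/- arXiv:2110.14887 — 4 statements merged into one kernel-verified Lean document; each statement's English description precedes it below -/
import Mathlib

section
/- Let λ ≠ 0 and C be constants. Suppose the functions P_n(t), Q_n(t) (with P_n never zero) satisfy both the discrete relations P_{n+1} = (λ Q_n + (v_n - λ)P_n)²/(λ u_n P_n) - C/(u_n P_n), Q_{n+1} = -((v_n - λ)/λ)P_n - Q_n, and the differential relations P_{n,t} = (u_n - u_{n-1} + v_n - λ)P_n + 2λ Q_n, Q_{n,t} = -u_{n-1}P_n + λ Q_n²/P_n - C/P_n, for all n and t, where u_n ≠ 0. Then the compatibility of the two systems (i.e., d/dt applied to the discrete relations being consistent with shifting the differential relations) holds if and only if u_n, v_n satisfy u_{n,t} = u_n(u_{n-1} - u_{n+1} + v_n - v_{n+1}) and v_{n,t} = v_n(u_{n-1} - u_n). -/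
/-- Forward propagation step: if the differential relations hold at level `n` (at time `t`)
and `(u,v)` solves the lattice, then the differential relations hold at level `n+1`. -/
private lemma rtl_step_up (lam C : ℝ) (hlam : lam ≠ 0)
    (u v u' v' P Q : ℤ → ℝ → ℝ)
    (hu0 : ∀ (n : ℤ) (t : ℝ), u n t ≠ 0)
    (hP0 : ∀ (n : ℤ) (t : ℝ), P n t ≠ 0)
    (hu' : ∀ (n : ℤ) (t : ℝ), HasDerivAt (u n) (u' n t) t)
    (hv' : ∀ (n : ℤ) (t : ℝ), HasDerivAt (v n) (v' n t) t)
    (hdisc : ∀ (n : ℤ) (t : ℝ),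
      P (n + 1) t = (lam * Q n t + (v n t - lam) * P n t) ^ 2 / (lam * u n t * P n t)
          - C / (u n t * P n t) ∧
      Q (n + 1) t = -((v n t - lam) / lam) * P n t - Q n t)
    (hlat : ∀ (n : ℤ) (t : ℝ),
        u' n t = u n t * (u (n - 1) t - u (n + 1) t + v n t - v (n + 1) t) ∧
        v' n t = v n t * (u (n - 1) t - u n t))
    (n : ℤ) (t : ℝ)
    (hPn : HasDerivAt (P n) ((u n t - u (n - 1) t + v n t - lam) * P n t + 2 * lam * Q n t) t)
    (hQn : HasDerivAt (Q n) (-u (n - 1) t * P n t + lam * (Q n t) ^ 2 / P n t - C / P n t) t) :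
    HasDerivAt (P (n + 1))
      ((u (n + 1) t - u n t + v (n + 1) t - lam) * P (n + 1) t + 2 * lam * Q (n + 1) t) t ∧
    HasDerivAt (Q (n + 1))
      (-u n t * P (n + 1) t + lam * (Q (n + 1) t) ^ 2 / P (n + 1) t - C / P (n + 1) t) t := by
  have hpne := hP0 n t
  have hune := hu0 n t
  have hd1 : lam * u n t * P n t ≠ 0 := mul_ne_zero (mul_ne_zero hlam hune) hpne
  have hd2 : u n t * P n t ≠ 0 := mul_ne_zero hune hpne
  have hprod : P (n + 1) t * (lam * u n t * P n t)
      = (lam * Q n t + (v n t - lam) * P n t) ^ 2 - lam * C := by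
    rw [(hdisc n t).1]; field_simp
  have hAC : (lam * Q n t + (v n t - lam) * P n t) ^ 2 - lam * C ≠ 0 := by
    rw [← hprod]; exact mul_ne_zero (hP0 (n + 1) t) hd1
  have hP1val : P (n + 1) t
      = ((lam * Q n t + (v n t - lam) * P n t) ^ 2 - lam * C) / (lam * u n t * P n t) :=
    (eq_div_iff hd1).mpr hprod
  have hPfun : P (n + 1) = fun s =>
      (lam * Q n s + (v n s - lam) * P n s) ^ 2 / (lam * u n s * P n s)
        - C / (u n s * P n s) := funext fun s => (hdisc n s).1
  have hQfun : Q (n + 1) = fun s => -((v n s - lam) / lam) * P n s - Q n s :=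
    funext fun s => (hdisc n s).2
  have hcombP :=
    ((((hQn.const_mul lam).add (((hv' n t).sub_const lam).mul hPn)).pow 2).div
        (((hu' n t).const_mul lam).mul hPn) hd1).sub
      ((hasDerivAt_const t C).div ((hu' n t).mul hPn) hd2)
  have hcombQ :=
    (((((hv' n t).sub_const lam).div_const lam).neg.mul hPn).sub hQn)
  constructor
  · rw [hPfun, hQfun]
    refine hcombP.congr_deriv ?_
    simp only [Pi.add_apply, Pi.sub_apply, Pi.mul_apply, Pi.div_apply, Pi.neg_apply, Pi.pow_apply]
    rw [(hlat n t).1, (hlat n t).2]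
    norm_num
    field_simp
    ring
  · rw [hQfun]
    refine hcombQ.congr_deriv ?_
    simp only [Pi.add_apply, Pi.sub_apply, Pi.mul_apply, Pi.div_apply, Pi.neg_apply, Pi.pow_apply]
    rw [hP1val, (hlat n t).2]
    generalize hX : (lam * Q n t + (v n t - lam) * P n t) ^ 2 - lam * C = A at hAC ⊢
    field_simp
    rw [← hX]
    ring

private lemma rtl_step_down (lam C : ℝ) (hlam : lam ≠ 0)
    (u v u' v' P Q : ℤ → ℝ → ℝ)
    (hu0 : ∀ (n : ℤ) (t : ℝ), u n t ≠ 0)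
    (hP0 : ∀ (n : ℤ) (t : ℝ), P n t ≠ 0)
    (hu' : ∀ (n : ℤ) (t : ℝ), HasDerivAt (u n) (u' n t) t)
    (hv' : ∀ (n : ℤ) (t : ℝ), HasDerivAt (v n) (v' n t) t)
    (hdisc : ∀ (n : ℤ) (t : ℝ),
      P (n + 1) t = (lam * Q n t + (v n t - lam) * P n t) ^ 2 / (lam * u n t * P n t)
          - C / (u n t * P n t) ∧
      Q (n + 1) t = -((v n t - lam) / lam) * P n t - Q n t)
    (hlat : ∀ (n : ℤ) (t : ℝ),
        u' n t = u n t * (u (n - 1) t - u (n + 1) t + v n t - v (n + 1) t) ∧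
        v' n t = v n t * (u (n - 1) t - u n t))
    (n : ℤ) (t : ℝ)
    (hP1 : HasDerivAt (P (n + 1))
      ((u (n + 1) t - u n t + v (n + 1) t - lam) * P (n + 1) t + 2 * lam * Q (n + 1) t) t)
    (hQ1 : HasDerivAt (Q (n + 1))
      (-u n t * P (n + 1) t + lam * (Q (n + 1) t) ^ 2 / P (n + 1) t - C / P (n + 1) t) t) :
    HasDerivAt (P n) ((u n t - u (n - 1) t + v n t - lam) * P n t + 2 * lam * Q n t) t ∧
    HasDerivAt (Q n) (-u (n - 1) t * P n t + lam * (Q n t) ^ 2 / P n t - C / P n t) t := by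
  have hpne := hP0 n t
  have hp1ne := hP0 (n + 1) t
  have hune := hu0 n t
  have hd2 : u n t * P (n + 1) t ≠ 0 := mul_ne_zero hune hp1ne
  have hprod : P (n + 1) t * (u n t * P n t) = lam * (Q (n + 1) t) ^ 2 - C := by
    rw [(hdisc n t).1, (hdisc n t).2]; field_simp; ring
  have hACd : lam * (Q (n + 1) t) ^ 2 - C ≠ 0 := by
    rw [← hprod]; exact mul_ne_zero hp1ne (mul_ne_zero hune hpne)
  have hP1val : P (n + 1) t = (lam * (Q (n + 1) t) ^ 2 - C) / (u n t * P n t) :=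
    (eq_div_iff (mul_ne_zero hune hpne)).mpr hprod
  have hPfun : P n = fun s => (lam * (Q (n + 1) s) ^ 2 - C) / (u n s * P (n + 1) s) := by
    funext s
    rw [eq_div_iff (mul_ne_zero (hu0 n s) (hP0 (n + 1) s))]
    rw [(hdisc n s).1, (hdisc n s).2]
    field_simp [hlam, hu0 n s, hP0 n s]
    ring
  have hQfun : Q n = fun s => -Q (n + 1) s - ((v n s - lam) / lam) * P n s := by
    funext s
    rw [(hdisc n s).2]; ring
  have hcombP :=
    (((hQ1.pow 2).const_mul lam).sub_const C).div ((hu' n t).mul hP1) hd2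
  have hPd : HasDerivAt (P n)
      ((u n t - u (n - 1) t + v n t - lam) * P n t + 2 * lam * Q n t) t := by
    rw [hPfun]
    refine hcombP.congr_deriv ?_
    rw [hQfun, hPfun]
    simp only [Pi.add_apply, Pi.sub_apply, Pi.mul_apply, Pi.div_apply, Pi.neg_apply, Pi.pow_apply]
    rw [(hlat n t).1]
    norm_num
    field_simp
    ring
  refine ⟨hPd, ?_⟩
  have hcombQ := (hQ1.neg).sub ((((hv' n t).sub_const lam).div_const lam).mul hPd)
  rw [hQfun]
  refine hcombQ.congr_deriv ?_
  simp only [Pi.add_apply, Pi.sub_apply, Pi.mul_apply, Pi.div_apply, Pi.neg_apply, Pi.pow_apply]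
  rw [hQfun]
  simp only []
  rw [hP1val, (hlat n t).2]
  field_simp
  ring

private lemma rtl_solve (lam C : ℝ) (hlam : lam ≠ 0)
    (u v u' v' P Q : ℤ → ℝ → ℝ)
    (hu0 : ∀ (n : ℤ) (t : ℝ), u n t ≠ 0)
    (hP0 : ∀ (n : ℤ) (t : ℝ), P n t ≠ 0)
    (hu' : ∀ (n : ℤ) (t : ℝ), HasDerivAt (u n) (u' n t) t)
    (hv' : ∀ (n : ℤ) (t : ℝ), HasDerivAt (v n) (v' n t) t)
    (hdisc : ∀ (n : ℤ) (t : ℝ),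
      P (n + 1) t = (lam * Q n t + (v n t - lam) * P n t) ^ 2 / (lam * u n t * P n t)
          - C / (u n t * P n t) ∧
      Q (n + 1) t = -((v n t - lam) / lam) * P n t - Q n t)
    (n : ℤ) (t : ℝ)
    (hPn : HasDerivAt (P n) ((u n t - u (n - 1) t + v n t - lam) * P n t + 2 * lam * Q n t) t)
    (hQn : HasDerivAt (Q n) (-u (n - 1) t * P n t + lam * (Q n t) ^ 2 / P n t - C / P n t) t)
    (hP1 : HasDerivAt (P (n + 1))
      ((u (n + 1) t - u n t + v (n + 1) t - lam) * P (n + 1) t + 2 * lam * Q (n + 1) t) t)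
    (hQ1 : HasDerivAt (Q (n + 1))
      (-u n t * P (n + 1) t + lam * (Q (n + 1) t) ^ 2 / P (n + 1) t - C / P (n + 1) t) t) :
    u' n t = u n t * (u (n - 1) t - u (n + 1) t + v n t - v (n + 1) t) ∧
    v' n t = v n t * (u (n - 1) t - u n t) := by
  have hpne := hP0 n t
  have hune := hu0 n t
  have hd1 : lam * u n t * P n t ≠ 0 := mul_ne_zero (mul_ne_zero hlam hune) hpne
  have hd2 : u n t * P n t ≠ 0 := mul_ne_zero hune hpne
  have hprod : P (n + 1) t * (lam * u n t * P n t)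
      = (lam * Q n t + (v n t - lam) * P n t) ^ 2 - lam * C := by
    rw [(hdisc n t).1]; field_simp
  have hAC : (lam * Q n t + (v n t - lam) * P n t) ^ 2 - lam * C ≠ 0 := by
    rw [← hprod]; exact mul_ne_zero (hP0 (n + 1) t) hd1
  have hP1val : P (n + 1) t
      = ((lam * Q n t + (v n t - lam) * P n t) ^ 2 - lam * C) / (lam * u n t * P n t) :=
    (eq_div_iff hd1).mpr hprod
  have hPfun : P (n + 1) = fun s =>
      (lam * Q n s + (v n s - lam) * P n s) ^ 2 / (lam * u n s * P n s)
        - C / (u n s * P n s) := funext fun s => (hdisc n s).1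
  have hQfun : Q (n + 1) = fun s => -((v n s - lam) / lam) * P n s - Q n s :=
    funext fun s => (hdisc n s).2
  have hcombP :=
    ((((hQn.const_mul lam).add (((hv' n t).sub_const lam).mul hPn)).pow 2).div
        (((hu' n t).const_mul lam).mul hPn) hd1).sub
      ((hasDerivAt_const t C).div ((hu' n t).mul hPn) hd2)
  have hcombQ :=
    (((((hv' n t).sub_const lam).div_const lam).neg.mul hPn).sub hQn)
  rw [hPfun] at hP1
  rw [hQfun] at hQ1
  have hE1 := hcombP.unique hP1
  have hE2 := hcombQ.unique hQ1
  simp only [Pi.add_apply, Pi.sub_apply, Pi.mul_apply, Pi.div_apply, Pi.neg_apply, Pi.pow_apply] at hE1 hE2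
  -- abbreviations (as plain terms)
  -- solve for v'
  have hidq : -(v n t * (u (n - 1) t - u n t) / lam) * P n t
        + -((v n t - lam) / lam) *
            ((u n t - u (n - 1) t + v n t - lam) * P n t + 2 * lam * Q n t)
        - (-u (n - 1) t * P n t + lam * (Q n t) ^ 2 / P n t - C / P n t)
      = -u n t * (((lam * Q n t + (v n t - lam) * P n t) ^ 2 - lam * C) / (lam * u n t * P n t)) +
        lam * (-((v n t - lam) / lam) * P n t - Q n t) ^ 2 /
          (((lam * Q n t + (v n t - lam) * P n t) ^ 2 - lam * C) / (lam * u n t * P n t)) -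
        C / (((lam * Q n t + (v n t - lam) * P n t) ^ 2 - lam * C) / (lam * u n t * P n t)) := by
    generalize hX : (lam * Q n t + (v n t - lam) * P n t) ^ 2 - lam * C = A at hAC ⊢
    field_simp
    rw [← hX]
    ring
  rw [hP1val] at hE2
  have hveq : v' n t = v n t * (u (n - 1) t - u n t) := by
    have h2 : (v' n t - v n t * (u (n - 1) t - u n t)) * (P n t / lam) = 0 := by
      linear_combination hidq - hE2
    rcases mul_eq_zero.mp h2 with h | h
    · linarith [sub_eq_zero.mp h]
    · rcases div_eq_zero_iff.mp h with h' | h'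
      · exact absurd h' hpne
      · exact absurd h' hlam
  refine ⟨?_, hveq⟩
  rw [hveq, (hdisc n t).2] at hE1
  have hidp :
      (2 * (lam * Q n t + (v n t - lam) * P n t) *
          (lam * (-u (n - 1) t * P n t + lam * (Q n t) ^ 2 / P n t - C / P n t) +
            (v n t * (u (n - 1) t - u n t) * P n t +
              (v n t - lam) * ((u n t - u (n - 1) t + v n t - lam) * P n t + 2 * lam * Q n t))) *
          (lam * u n t * P n t) -
        (lam * Q n t + (v n t - lam) * P n t) ^ 2 *
          (lam * (u n t * (u (n - 1) t - u (n + 1) t + v n t - v (n + 1) t)) * P n t +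
            lam * u n t * ((u n t - u (n - 1) t + v n t - lam) * P n t + 2 * lam * Q n t))) /
        (lam * u n t * P n t) ^ 2 -
      (0 * (u n t * P n t) -
          C * ((u n t * (u (n - 1) t - u (n + 1) t + v n t - v (n + 1) t)) * P n t +
            u n t * ((u n t - u (n - 1) t + v n t - lam) * P n t + 2 * lam * Q n t))) /
        (u n t * P n t) ^ 2
      = (u (n + 1) t - u n t + v (n + 1) t - lam) *
          ((lam * Q n t + (v n t - lam) * P n t) ^ 2 / (lam * u n t * P n t)
            - C / (u n t * P n t)) +
        2 * lam * (-((v n t - lam) / lam) * P n t - Q n t) := by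
    field_simp
    ring
  have h3 : (u' n t - u n t * (u (n - 1) t - u (n + 1) t + v n t - v (n + 1) t)) *
      (-((lam * Q n t + (v n t - lam) * P n t) ^ 2) * (lam * P n t) /
          (lam * u n t * P n t) ^ 2 +
        C * P n t / (u n t * P n t) ^ 2) = 0 := by
    linear_combination hE1 - hidp
  have hK : -((lam * Q n t + (v n t - lam) * P n t) ^ 2) * (lam * P n t) /
          (lam * u n t * P n t) ^ 2 + C * P n t / (u n t * P n t) ^ 2
      = (C * lam - (lam * Q n t + (v n t - lam) * P n t) ^ 2) / (lam * u n t ^ 2 * P n t) := by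
    field_simp
    ring
  rw [hK] at h3
  rcases mul_eq_zero.mp h3 with h | h
  · linarith [sub_eq_zero.mp h]
  · rcases div_eq_zero_iff.mp h with h' | h'
    · exact absurd (by linarith : (lam * Q n t + (v n t - lam) * P n t) ^ 2 - lam * C = 0) hAC
    · exact absurd h' (mul_ne_zero (mul_ne_zero hlam (pow_ne_zero 2 hune)) hpne)


/-- Theorem 3.1: the discrete system (GIM) and the differential system in `(P, Q)`
constitute a nonlinear Lax pair for the Ruijsenaars-Toda lattice: given that the
discrete relations hold identically and the differential relations hold at the seed
`n = 0`, the differential relations propagate to all `n` (i.e. the two systems are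
compatible) if and only if `(u, v)` solves the lattice. -/
theorem rtl_nonlinear_lax_pair (lam C : ℝ) (hlam : lam ≠ 0)
    (u v u' v' P Q : ℤ → ℝ → ℝ)
    (hu0 : ∀ (n : ℤ) (t : ℝ), u n t ≠ 0)
    (hP0 : ∀ (n : ℤ) (t : ℝ), P n t ≠ 0)
    (hu' : ∀ (n : ℤ) (t : ℝ), HasDerivAt (u n) (u' n t) t)
    (hv' : ∀ (n : ℤ) (t : ℝ), HasDerivAt (v n) (v' n t) t)
    (hdisc : ∀ (n : ℤ) (t : ℝ),
      P (n + 1) t = (lam * Q n t + (v n t - lam) * P n t) ^ 2 / (lam * u n t * P n t)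
          - C / (u n t * P n t) ∧
      Q (n + 1) t = -((v n t - lam) / lam) * P n t - Q n t)
    (hseed : ∀ t : ℝ,
      HasDerivAt (P 0) ((u 0 t - u (-1) t + v 0 t - lam) * P 0 t + 2 * lam * Q 0 t) t ∧
      HasDerivAt (Q 0)
        (-u (-1) t * P 0 t + lam * (Q 0 t) ^ 2 / P 0 t - C / P 0 t) t) :
    (∀ (n : ℤ) (t : ℝ),
        HasDerivAt (P n)
          ((u n t - u (n - 1) t + v n t - lam) * P n t + 2 * lam * Q n t) t ∧
        HasDerivAt (Q n)
          (-u (n - 1) t * P n t + lam * (Q n t) ^ 2 / P n t - C / P n t) t)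
    ↔ (∀ (n : ℤ) (t : ℝ),
        u' n t = u n t * (u (n - 1) t - u (n + 1) t + v n t - v (n + 1) t) ∧
        v' n t = v n t * (u (n - 1) t - u n t)) := by
  constructor
  · intro hdiff n t
    have hP1 := (hdiff (n + 1) t).1
    have hQ1 := (hdiff (n + 1) t).2
    rw [show n + 1 - 1 = n from by ring] at hP1 hQ1
    exact rtl_solve lam C hlam u v u' v' P Q hu0 hP0 hu' hv' hdisc n t
      (hdiff n t).1 (hdiff n t).2 hP1 hQ1
  · intro hlat n
    induction n using Int.induction_on with
    | zero =>
      intro t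
      rw [show (0 : ℤ) - 1 = -1 from by decide]
      exact hseed t
    | succ k ih =>
      intro t
      rw [show (k : ℤ) + 1 - 1 = (k : ℤ) from by ring]
      exact rtl_step_up lam C hlam u v u' v' P Q hu0 hP0 hu' hv' hdisc hlat k t
        (ih t).1 (ih t).2
    | pred k ih =>
      intro t
      have h1 := (ih t).1
      have h2 := (ih t).2
      rw [show -(k : ℤ) = (-(k : ℤ) - 1) + 1 from by ring] at h1 h2
      rw [show (-(k : ℤ) - 1) + 1 - 1 = -(k : ℤ) - 1 from by ring] at h1 h2
      exact rtl_step_down lam C hlam u v u' v' P Q hu0 hP0 hu' hv' hdisc hlat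
        (-(k : ℤ) - 1) t h1 h2
end

section
/- Let θ = ln(λ_2/λ_1) and w = λ_1 - λ_2 for constants λ_2 > λ_1 > 0, and let c be a real constant. Then the functions u_n(t) = λ_1 (e^{(n+1)θ + wt + c} + 1)/(e^{nθ + wt + c} + 1) and v_n(t) = -λ_1 (e^{nθ + wt + c} + 1)/(e^{(n-1)θ + wt + c} + 1) satisfy the Ruijsenaars-Toda system u_{n,t} = u_n(u_{n-1} - u_{n+1} + v_n - v_{n+1}), v_{n,t} = v_n(u_{n-1} - u_n) for all t ∈ ℝ and n ∈ ℤ. -/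
/-- The kink solution of the Ruijsenaars-Toda lattice in Toda-type form:
`u n t = λ₁ (e^{(n+1)θ+wt+c}+1)/(e^{nθ+wt+c}+1)`,
`v n t = -λ₁ (e^{nθ+wt+c}+1)/(e^{(n-1)θ+wt+c}+1)`, with `θ = ln(λ₂/λ₁)`,
`w = λ₁ - λ₂`, solves the lattice for all `t` and `n`. -/
theorem rtl_kink_solution (l1 l2 c : ℝ) (h1 : 0 < l1) (h12 : l1 < l2)
    (θ w : ℝ) (hθ : θ = Real.log (l2 / l1)) (hw : w = l1 - l2)
    (u v : ℤ → ℝ → ℝ)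
    (hu : ∀ (n : ℤ) (t : ℝ),
      u n t = l1 * (Real.exp (((n : ℝ) + 1) * θ + w * t + c) + 1)
        / (Real.exp ((n : ℝ) * θ + w * t + c) + 1))
    (hv : ∀ (n : ℤ) (t : ℝ),
      v n t = -l1 * (Real.exp ((n : ℝ) * θ + w * t + c) + 1)
        / (Real.exp (((n : ℝ) - 1) * θ + w * t + c) + 1)) :
    ∀ (n : ℤ) (t : ℝ),
      HasDerivAt (u n)
        (u n t * (u (n - 1) t - u (n + 1) t + v n t - v (n + 1) t)) t ∧
      HasDerivAt (v n) (v n t * (u (n - 1) t - u n t)) t := by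
  intro n t
  have hl2 : 0 < l2 := h1.trans h12
  have hq0 : 0 < l2 / l1 := by positivity
  have hq : Real.exp θ = l2 / l1 := by rw [hθ]; exact Real.exp_log hq0
  set q := l2 / l1 with hqdef
  have hl2q : l2 = q * l1 := by rw [hqdef, div_mul_cancel₀ l2 (ne_of_gt h1)]
  have hE : ∀ a : ℝ, HasDerivAt (fun s : ℝ => Real.exp (a * θ + w * s + c))
      (w * Real.exp (a * θ + w * t + c)) t := by
    intro a
    have h : HasDerivAt (fun s : ℝ => a * θ + w * s + c) w t := by
      simpa using (((hasDerivAt_id t).const_mul w).const_add (a * θ)).add_const c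
    simpa [mul_comm] using h.exp
  set x := Real.exp ((n : ℝ) * θ + w * t + c) with hxdef
  have hx : 0 < x := Real.exp_pos _
  have key : ∀ a b : ℝ, a = b + 1 →
      Real.exp (a * θ + w * t + c) = q * Real.exp (b * θ + w * t + c) := by
    intro a b hab
    subst hab
    rw [← hq, ← Real.exp_add]
    congr 1; ring
  have exp1 : Real.exp (((n : ℝ) + 1) * θ + w * t + c) = q * x := by
    rw [key ((n : ℝ) + 1) (n : ℝ) rfl, ← hxdef]
  have exp2 : Real.exp (((n : ℝ) + 1 + 1) * θ + w * t + c) = q * (q * x) := by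
    rw [key ((n : ℝ) + 1 + 1) ((n : ℝ) + 1) rfl, exp1]
  have exm : Real.exp (((n : ℝ) - 1) * θ + w * t + c) = x / q := by
    have h := key (n : ℝ) ((n : ℝ) - 1) (by ring)
    rw [← hxdef] at h
    rw [eq_div_iff (ne_of_gt hq0), h]; ring
  have exm1p1 : Real.exp (((n : ℝ) - 1 + 1) * θ + w * t + c) = x := by
    rw [hxdef]; congr 1; ring
  have exp1m1 : Real.exp (((n : ℝ) + 1 - 1) * θ + w * t + c) = x := by
    rw [hxdef]; congr 1; ring
  have hne1 : x + 1 ≠ 0 := by positivity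
  have hne2 : q * x + 1 ≠ 0 := by positivity
  have hne3 : x / q + 1 ≠ 0 := by positivity
  have hqne : q ≠ 0 := ne_of_gt hq0
  -- rewrite the values
  have hu0 := hu n t
  have hum := hu (n - 1) t
  have hup := hu (n + 1) t
  have hv0 := hv n t
  have hvp := hv (n + 1) t
  push_cast at hum hup hvp
  rw [exp1, ← hxdef] at hu0
  rw [exm1p1, exm] at hum
  rw [exp2, exp1] at hup
  rw [← hxdef, exm] at hv0
  rw [exp1, exp1m1] at hvp
  -- derivative of u n
  have hun : HasDerivAt (u n)
      ((l1 * (w * (q * x)) * (x + 1) - l1 * (q * x + 1) * (w * x)) / (x + 1) ^ 2) t := by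
    have hNum : HasDerivAt
        (fun s => l1 * (Real.exp (((n : ℝ) + 1) * θ + w * s + c) + 1))
        (l1 * (w * Real.exp (((n : ℝ) + 1) * θ + w * t + c))) t := by
      simpa using ((hE ((n : ℝ) + 1)).add_const 1).const_mul l1
    have hDen : HasDerivAt (fun s => Real.exp ((n : ℝ) * θ + w * s + c) + 1)
        (w * Real.exp ((n : ℝ) * θ + w * t + c)) t := (hE _).add_const 1
    have hne : Real.exp ((n : ℝ) * θ + w * t + c) + 1 ≠ 0 := by positivity
    have h := hNum.div hDen hne
    have hfun : u n = fun s => l1 * (Real.exp (((n : ℝ) + 1) * θ + w * s + c) + 1)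
        / (Real.exp ((n : ℝ) * θ + w * s + c) + 1) := funext (hu n)
    rw [hfun]
    convert h using 1
    · rfl
    · rfl
    · rfl
    rw [exp1, ← hxdef]
  -- derivative of v n
  have hvn : HasDerivAt (v n)
      ((-l1 * (w * x) * (x / q + 1) - -l1 * (x + 1) * (w * (x / q))) / (x / q + 1) ^ 2) t := by
    have hNum : HasDerivAt
        (fun s => -l1 * (Real.exp ((n : ℝ) * θ + w * s + c) + 1))
        (-l1 * (w * Real.exp ((n : ℝ) * θ + w * t + c))) t := by
      simpa using ((hE (n : ℝ)).add_const 1).const_mul (-l1)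
    have hDen : HasDerivAt (fun s => Real.exp (((n : ℝ) - 1) * θ + w * s + c) + 1)
        (w * Real.exp (((n : ℝ) - 1) * θ + w * t + c)) t := (hE _).add_const 1
    have hne : Real.exp (((n : ℝ) - 1) * θ + w * t + c) + 1 ≠ 0 := by positivity
    have h := hNum.div hDen hne
    have hfun : v n = fun s => -l1 * (Real.exp ((n : ℝ) * θ + w * s + c) + 1)
        / (Real.exp (((n : ℝ) - 1) * θ + w * s + c) + 1) := funext (hv n)
    rw [hfun]
    convert h using 1
    · rfl
    · rfl
    · rfl
    rw [exm, ← hxdef]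
  constructor
  · have hval : u n t * (u (n - 1) t - u (n + 1) t + v n t - v (n + 1) t)
        = (l1 * (w * (q * x)) * (x + 1) - l1 * (q * x + 1) * (w * x)) / (x + 1) ^ 2 := by
      rw [hu0, hum, hup, hv0, hvp, hw, hl2q]
      field_simp
      ring
    rw [hval]; exact hun
  · have hval : v n t * (u (n - 1) t - u n t)
        = (-l1 * (w * x) * (x / q + 1) - -l1 * (x + 1) * (w * (x / q))) / (x / q + 1) ^ 2 := by
      rw [hv0, hum, hu0, hw, hl2q]
      field_simp
      ring
    rw [hval]; exact hvn
end

section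
/- Let F, G be the functions F(P,Q,u,v) = (λQ + (v-λ)P)²/(λuP) - C/(uP) and G(P,Q,v) = -((v-λ)/λ)P - Q (with λ ≠ 0, u ≠ 0, P ≠ 0). Suppose u_n, v_n solve the Ruijsenaars-Toda system u_{n,t} = u_n(u_{n-1}-u_{n+1}+v_n-v_{n+1}), v_{n,t} = v_n(u_{n-1}-u_n), and P_n, Q_n solve the linear system P_{n,t} = u_{n-1}P_{n-1} + (u_n-u_{n-1})P_n - u_nP_{n+1} + v_n(Q_n - Q_{n+1}), Q_{n,t} = u_{n-1}(P_{n-1} - P_n). If P_{n+1} = F(P_n,Q_n,u_n,v_n) and Q_{n+1} = G(P_n,Q_n,v_n) hold at some time t_0 for all n, then d/dt[P_{n+1} - F(P_n,Q_n,u_n,v_n)] = 0 and d/dt[Q_{n+1} - G(P_n,Q_n,v_n)] = 0 at t_0; i.e., the constraint surface is invariant under the flow. -/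
set_option maxHeartbeats 2000000 in
/-- Generalized invariant manifold property: if `(u, v)` solves the Ruijsenaars-Toda
lattice, `(P, Q)` solves the simplified linearized system, and the discrete
constraints `P_{n+1} = F(P_n,Q_n,u_n,v_n)`, `Q_{n+1} = G(P_n,Q_n,v_n)` hold at a
time `t₀` for all `n`, then the time derivative of each constraint vanishes at
`t₀`; i.e. the constraint surface is invariant under the flow. -/
theorem gim_invariance (lam C : ℝ) (hlam : lam ≠ 0)
    (u v P Q : ℤ → ℝ → ℝ) (t₀ : ℝ)
    (hu0 : ∀ (n : ℤ) (t : ℝ), u n t ≠ 0)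
    (hP0 : ∀ (n : ℤ) (t : ℝ), P n t ≠ 0)
    (hu : ∀ (n : ℤ) (t : ℝ), HasDerivAt (u n)
      (u n t * (u (n - 1) t - u (n + 1) t + v n t - v (n + 1) t)) t)
    (hv : ∀ (n : ℤ) (t : ℝ), HasDerivAt (v n) (v n t * (u (n - 1) t - u n t)) t)
    (hP : ∀ (n : ℤ) (t : ℝ), HasDerivAt (P n)
      (u (n - 1) t * P (n - 1) t + (u n t - u (n - 1) t) * P n t
        - u n t * P (n + 1) t + v n t * (Q n t - Q (n + 1) t)) t)
    (hQ : ∀ (n : ℤ) (t : ℝ), HasDerivAt (Q n)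
      (u (n - 1) t * (P (n - 1) t - P n t)) t)
    (hconstr : ∀ n : ℤ,
      P (n + 1) t₀ = (lam * Q n t₀ + (v n t₀ - lam) * P n t₀) ^ 2
          / (lam * u n t₀ * P n t₀) - C / (u n t₀ * P n t₀) ∧
      Q (n + 1) t₀ = -((v n t₀ - lam) / lam) * P n t₀ - Q n t₀) :
    ∀ n : ℤ,
      HasDerivAt (fun t => P (n + 1) t
        - ((lam * Q n t + (v n t - lam) * P n t) ^ 2 / (lam * u n t * P n t)
          - C / (u n t * P n t))) 0 t₀ ∧
      HasDerivAt (fun t => Q (n + 1) t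
        - (-((v n t - lam) / lam) * P n t - Q n t)) 0 t₀ := by
  intro n
  have h1 := (hconstr n).1
  have h2 := (hconstr n).2
  have h1' := (hconstr (n + 1)).1
  have h2' := (hconstr (n + 1)).2
  have hm1 := (hconstr (n - 1)).1
  have hm2 := (hconstr (n - 1)).2
  rw [sub_add_cancel] at hm1 hm2
  have hum : u (n - 1) t₀ ≠ 0 := hu0 _ _
  have hun : u n t₀ ≠ 0 := hu0 _ _
  have hup : u (n + 1) t₀ ≠ 0 := hu0 _ _
  have hPn : P n t₀ ≠ 0 := hP0 _ _
  have hPm0 : P (n - 1) t₀ ≠ 0 := hP0 _ _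
  have hP1ne : P (n + 1) t₀ ≠ 0 := hP0 _ _
  have hPm : P (n - 1) t₀ = (lam * (Q n t₀) ^ 2 - C) / (u (n - 1) t₀ * P n t₀) := by
    rw [eq_div_iff (mul_ne_zero hum hPn), hm1, hm2]
    field_simp [hlam, hum, hPm0]
    ring
  have hE4 : Q n t₀ = -((v n t₀ - lam) / lam) * P n t₀ - Q (n + 1) t₀ := by
    rw [h2]; ring
  have hCkey : lam * (Q (n + 1) t₀) ^ 2 - C = u n t₀ * P n t₀ * P (n + 1) t₀ := by
    rw [h1, h2]; field_simp [hlam, hun, hPn]; ring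
  have hC1 : lam * (Q (n + 1) t₀) ^ 2 - C ≠ 0 := by
    rw [hCkey]; exact mul_ne_zero (mul_ne_zero hun hPn) hP1ne
  have hE3 : P n t₀ = (lam * (Q (n + 1) t₀) ^ 2 - C) / (u n t₀ * P (n + 1) t₀) := by
    rw [eq_div_iff (mul_ne_zero hun hP1ne), hCkey]; ring
  have hCkey' : lam * (Q (n + 1 + 1) t₀) ^ 2 - C
      = u (n + 1) t₀ * P (n + 1) t₀ * P (n + 1 + 1) t₀ := by
    rw [h1', h2']; field_simp [hlam, hup, hP1ne]; ring
  have hE1 : P (n + 1 + 1) t₀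
      = (lam * (Q (n + 1 + 1) t₀) ^ 2 - C) / (u (n + 1) t₀ * P (n + 1) t₀) := by
    rw [eq_div_iff (mul_ne_zero hup hP1ne), hCkey']; ring
  have hPn1 := hP (n + 1) t₀
  have hQn1 := hQ (n + 1) t₀
  simp only [add_sub_cancel_right] at hPn1 hQn1
  have hvn := hv n t₀
  have hun' := hu n t₀
  have hPn' := hP n t₀
  have hQn' := hQ n t₀
  constructor
  · have hA : HasDerivAt (fun t => lam * Q n t + (v n t - lam) * P n t)
        (lam * (u (n - 1) t₀ * (P (n - 1) t₀ - P n t₀))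
          + ((v n t₀ * (u (n - 1) t₀ - u n t₀)) * P n t₀ + (v n t₀ - lam) *
            (u (n - 1) t₀ * P (n - 1) t₀ + (u n t₀ - u (n - 1) t₀) * P n t₀
              - u n t₀ * P (n + 1) t₀ + v n t₀ * (Q n t₀ - Q (n + 1) t₀)))) t₀ :=
      (hQn'.const_mul lam).add ((hvn.sub_const lam).mul hPn')
    have hden : HasDerivAt (fun t => lam * u n t * P n t)
        (lam * (u n t₀ * (u (n - 1) t₀ - u (n + 1) t₀ + v n t₀ - v (n + 1) t₀)) * P n t₀
          + lam * u n t₀ *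
            (u (n - 1) t₀ * P (n - 1) t₀ + (u n t₀ - u (n - 1) t₀) * P n t₀
              - u n t₀ * P (n + 1) t₀ + v n t₀ * (Q n t₀ - Q (n + 1) t₀))) t₀ :=
      (hun'.const_mul lam).mul hPn'
    have hden2 : HasDerivAt (fun t => u n t * P n t)
        ((u n t₀ * (u (n - 1) t₀ - u (n + 1) t₀ + v n t₀ - v (n + 1) t₀)) * P n t₀
          + u n t₀ *
            (u (n - 1) t₀ * P (n - 1) t₀ + (u n t₀ - u (n - 1) t₀) * P n t₀
              - u n t₀ * P (n + 1) t₀ + v n t₀ * (Q n t₀ - Q (n + 1) t₀))) t₀ :=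
      hun'.mul hPn'
    have hdiv1 := (hA.pow 2).div hden (mul_ne_zero (mul_ne_zero hlam hun) hPn)
    have hdiv2 := (hasDerivAt_const t₀ C).div hden2 (mul_ne_zero hun hPn)
    have htot := hPn1.sub (hdiv1.sub hdiv2)
    convert htot using 1
    case e'_4 => rfl
    case e'_5 => rfl
    case e'_8 => rfl
    simp only [Pi.pow_apply, Nat.cast_ofNat, Nat.reduceSub, pow_one]
    rw [hE1, h2', hPm, hE4, hE3]
    field_simp [hC1, hlam, hum, hun, hup, hPn, hP1ne]
    ring
  · have hrhs : HasDerivAt (fun t => -((v n t - lam) / lam) * P n t - Q n t)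
        (-(v n t₀ * (u (n - 1) t₀ - u n t₀) / lam) * P n t₀
          + -((v n t₀ - lam) / lam) *
            (u (n - 1) t₀ * P (n - 1) t₀ + (u n t₀ - u (n - 1) t₀) * P n t₀
              - u n t₀ * P (n + 1) t₀ + v n t₀ * (Q n t₀ - Q (n + 1) t₀))
          - u (n - 1) t₀ * (P (n - 1) t₀ - P n t₀)) t₀ :=
      ((((hvn.sub_const lam).div_const lam).neg.mul hPn').sub hQn')
    have htot := hQn1.sub hrhs
    convert htot using 1
    case e'_4 => rfl
    case e'_5 => rfl
    case e'_8 => rfl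
    rw [hPm, hE4, hE3]
    field_simp [hC1, hlam, hum, hun, hup, hPn, hP1ne]
    ring
end

section
/- For λ_2 > λ_1 > 0, θ = ln(λ_2/λ_1), w = λ_1 - λ_2, c ∈ ℝ, the function γ_n(t) = λ_2(e^{(n-1)θ + wt + c} + 1)/(e^{nθ + wt + c} + 1) satisfies both γ_{n,t} = -(γ_n - λ_1)(γ_n - λ_2) and γ_{n+1} = λ_1λ_2/(λ_1 + λ_2 - γ_n) for all t ∈ ℝ and n ∈ ℤ. -/
/-- The explicit function `γ n t = λ₂(e^{(n-1)θ+wt+c}+1)/(e^{nθ+wt+c}+1)`, with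
`θ = ln(λ₂/λ₁)`, `w = λ₁-λ₂`, `λ₂ > λ₁ > 0`, solves both the continuous Dubrovin
equation `γ_{n,t} = -(γ_n-λ₁)(γ_n-λ₂)` and the discrete Dubrovin equation
`γ_{n+1} = λ₁λ₂/(λ₁+λ₂-γ_n)` for all `t ∈ ℝ`, `n ∈ ℤ`. -/
theorem dubrovin_kink_solution (l1 l2 c : ℝ) (h1 : 0 < l1) (h12 : l1 < l2)
    (θ w : ℝ) (hθ : θ = Real.log (l2 / l1)) (hw : w = l1 - l2)
    (γ : ℤ → ℝ → ℝ)
    (hγ : ∀ (n : ℤ) (t : ℝ),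
      γ n t = l2 * (Real.exp (((n : ℝ) - 1) * θ + w * t + c) + 1)
        / (Real.exp ((n : ℝ) * θ + w * t + c) + 1)) :
    ∀ (n : ℤ) (t : ℝ),
      HasDerivAt (γ n) (-(γ n t - l1) * (γ n t - l2)) t ∧
      l1 + l2 - γ n t ≠ 0 ∧
      γ (n + 1) t = l1 * l2 / (l1 + l2 - γ n t) := by
  have h2 : 0 < l2 := h1.trans h12
  have hexp : Real.exp θ = l2 / l1 := by
    rw [hθ, Real.exp_log (div_pos h2 h1)]
  -- key simplified form
  have key : ∀ (m : ℤ) (s : ℝ),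
      γ m s = (l1 * Real.exp ((m : ℝ) * θ + w * s + c) + l2)
        / (Real.exp ((m : ℝ) * θ + w * s + c) + 1) := by
    intro m s
    rw [hγ]
    have h : Real.exp (((m : ℝ) - 1) * θ + w * s + c)
        = Real.exp ((m : ℝ) * θ + w * s + c) * (l1 / l2) := by
      have : ((m : ℝ) - 1) * θ + w * s + c = ((m : ℝ) * θ + w * s + c) + (-θ) := by ring
      rw [this, Real.exp_add, Real.exp_neg, hexp]
      rw [inv_div]
    rw [h]
    have hE : 0 < Real.exp ((m : ℝ) * θ + w * s + c) := Real.exp_pos _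
    field_simp
  intro n t
  set E := Real.exp ((n : ℝ) * θ + w * t + c) with hE
  have hEpos : 0 < E := Real.exp_pos _
  have hden : E + 1 ≠ 0 := by positivity
  have hγn : γ n t = (l1 * E + l2) / (E + 1) := key n t
  have hsum : l1 + l2 - γ n t = (l2 * E + l1) / (E + 1) := by
    rw [hγn]; field_simp; ring
  have hsumpos : 0 < l1 + l2 - γ n t := by
    rw [hsum]; positivity
  refine ⟨?_, ne_of_gt hsumpos, ?_⟩
  · -- derivative
    have hfun : γ n = fun s => (l1 * Real.exp ((n : ℝ) * θ + w * s + c) + l2)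
        / (Real.exp ((n : ℝ) * θ + w * s + c) + 1) := funext fun s => key n s
    rw [hfun]
    have hin : HasDerivAt (fun s : ℝ => (n : ℝ) * θ + w * s + c) w t := by
      simpa using (((hasDerivAt_id t).const_mul w).const_add ((n : ℝ) * θ)).add_const c
    have hexp' : HasDerivAt (fun s : ℝ => Real.exp ((n : ℝ) * θ + w * s + c)) (E * w) t :=
      hin.exp
    have hnum : HasDerivAt (fun s : ℝ => l1 * Real.exp ((n : ℝ) * θ + w * s + c) + l2)
        (l1 * (E * w)) t := (hexp'.const_mul l1).add_const l2
    have hdenf : HasDerivAt (fun s : ℝ => Real.exp ((n : ℝ) * θ + w * s + c) + 1)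
        (E * w) t := hexp'.add_const 1
    have hd := hnum.div hdenf hden
    refine hd.congr_deriv ?_
    have h1' : l1 ≠ 0 := ne_of_gt h1
    simp only [← hE]
    rw [hw]
    field_simp
    ring
  · -- discrete step
    have hE1 : Real.exp (((n : ℤ) + 1 : ℤ) * θ + w * t + c) = E * (l2 / l1) := by
      push_cast
      have : ((n : ℝ) + 1) * θ + w * t + c = ((n : ℝ) * θ + w * t + c) + θ := by ring
      rw [this, Real.exp_add, hexp, hE]
    have := key (n + 1) t
    rw [this]
    push_cast at hE1 ⊢
    rw [hE1, hsum]
    have h1' : l1 ≠ 0 := ne_of_gt h1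
    have hs' : l2 * E + l1 ≠ 0 := by positivity
    field_simp
end
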